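/- Let g ∈ ℝ³, g ≠ 0, k > 0. For the flow ğ̇ = k(ğ × g) × ğ on 𝕊²_g, the equilibrium ğ = g is asymptotically stable and its basin of attraction contains 𝕊²_g \ {−g}; the equilibrium ğ = −g is unstable. -/

import Mathlib

open Matrix

def skew (x : Fin 3 → ℝ) : Matrix (Fin 3) (Fin 3) ℝ :=
  !![0, -x 2, x 1; x 2, 0, -x 0; -x 1, x 0, 0]

def cross (u v : Fin 3 → ℝ) : Fin 3 → ℝ := (skew u).mulVec v

/-- A solution of ğ̇ = k(ğ × g) × ğ evolving on the sphere 𝕊²_g. -/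
def Sol (g : Fin 3 → ℝ) (k : ℝ) (γ : ℝ → Fin 3 → ℝ) : Prop :=
  (∀ t, HasDerivAt γ (k • cross (cross (γ t) g) (γ t)) t) ∧ (∀ t, γ t ⬝ᵥ γ t = g ⬝ᵥ g)

lemma dot3 (x y : Fin 3 → ℝ) : x ⬝ᵥ y = x 0*y 0 + x 1*y 1 + x 2*y 2 := by
  simp [dotProduct, Fin.sum_univ_three]

lemma cross_cross_self (x g : Fin 3 → ℝ) :
    cross (cross x g) x = (x ⬝ᵥ x) • g - (g ⬝ᵥ x) • x := by
  funext i
  fin_cases i <;>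
    simp [cross, skew, mulVec, dotProduct, Fin.sum_univ_three] <;> ring

lemma cs3 (g x : Fin 3 → ℝ) : (g ⬝ᵥ x)^2 ≤ (g ⬝ᵥ g)*(x ⬝ᵥ x) := by
  simp only [dot3]
  nlinarith [sq_nonneg (g 0*x 1 - g 1*x 0), sq_nonneg (g 0*x 2 - g 2*x 0),
    sq_nonneg (g 1*x 2 - g 2*x 1)]

lemma eq_neg_of_dot (g x : Fin 3 → ℝ) (h1 : x ⬝ᵥ x = g ⬝ᵥ g) (h2 : g ⬝ᵥ x = -(g ⬝ᵥ g)) :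
    x = -g := by
  simp only [dot3] at h1 h2
  funext i
  fin_cases i <;> simp <;>
    nlinarith [sq_nonneg (x 0 + g 0), sq_nonneg (x 1 + g 1), sq_nonneg (x 2 + g 2)]

lemma normsq_le_dot (x : Fin 3 → ℝ) : ‖x‖^2 ≤ x ⬝ᵥ x := by
  have h0 : (0:ℝ) ≤ x ⬝ᵥ x := by
    simp only [dot3]; nlinarith [sq_nonneg (x 0), sq_nonneg (x 1), sq_nonneg (x 2)]
  have hle : ‖x‖ ≤ Real.sqrt (x ⬝ᵥ x) := by
    rw [pi_norm_le_iff_of_nonneg (Real.sqrt_nonneg _)]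
    intro i
    rw [Real.norm_eq_abs, ← Real.sqrt_sq_eq_abs]
    apply Real.sqrt_le_sqrt
    simp only [dot3]
    fin_cases i <;> simp <;> nlinarith [sq_nonneg (x 0), sq_nonneg (x 1), sq_nonneg (x 2)]
  nlinarith [norm_nonneg x, Real.sq_sqrt h0, Real.sqrt_nonneg (x ⬝ᵥ x)]

lemma dot_le_normsq (x : Fin 3 → ℝ) : x ⬝ᵥ x ≤ 3*‖x‖^2 := by
  have h0 := norm_le_pi_norm x 0
  have h1 := norm_le_pi_norm x 1
  have h2 := norm_le_pi_norm x 2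
  simp only [Real.norm_eq_abs] at h0 h1 h2
  simp only [dot3]
  nlinarith [abs_nonneg (x 0), abs_nonneg (x 1), abs_nonneg (x 2),
    sq_abs (x 0), sq_abs (x 1), sq_abs (x 2)]

lemma dot_pos_of_ne (g : Fin 3 → ℝ) (hg : g ≠ 0) : 0 < g ⬝ᵥ g := by
  rcases lt_or_eq_of_le (by
    simp only [dot3]; nlinarith [sq_nonneg (g 0), sq_nonneg (g 1), sq_nonneg (g 2)] :
    (0:ℝ) ≤ g ⬝ᵥ g) with h | h
  · exact h
  · exfalso; apply hg; funext i
    have h' := h.symm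
    simp only [dot3] at h'
    fin_cases i <;> simp <;> nlinarith [sq_nonneg (g 0), sq_nonneg (g 1), sq_nonneg (g 2)]

lemma dot_sub_sub (x g : Fin 3 → ℝ) :
    (x - g) ⬝ᵥ (x - g) = x ⬝ᵥ x - 2*(g ⬝ᵥ x) + g ⬝ᵥ g := by
  simp only [dot3, Pi.sub_apply]; ring

/-- Derivative of the Lyapunov-type function V(t) = g ⬝ γ t. -/
lemma sol_V_deriv {g : Fin 3 → ℝ} {k : ℝ} {γ : ℝ → Fin 3 → ℝ} (h : Sol g k γ) (t : ℝ) :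
    HasDerivAt (fun t => g ⬝ᵥ γ t) (k * ((g ⬝ᵥ g)^2 - (g ⬝ᵥ γ t)^2)) t := by
  have hd := h.1 t
  rw [hasDerivAt_pi] at hd
  have hsum : HasDerivAt (fun t => ∑ i, g i * γ t i)
      (∑ i, g i * ((k • cross (cross (γ t) g) (γ t)) i)) t :=
    HasDerivAt.fun_sum (fun i _ => (hd i).const_mul (g i))
  have heq : (∑ i, g i * ((k • cross (cross (γ t) g) (γ t)) i))
      = k * ((g ⬝ᵥ g)^2 - (g ⬝ᵥ γ t)^2) := by
    have h2 := h.2 t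
    simp only [cross_cross_self, dot3] at h2 ⊢
    simp only [Fin.sum_univ_three, Pi.smul_apply, Pi.sub_apply, smul_eq_mul]
    linear_combination (k*(g 0*g 0 + g 1*g 1 + g 2*g 2)) * h2
  rw [heq] at hsum
  exact hsum

lemma sol_V_mono {g : Fin 3 → ℝ} {k : ℝ} {γ : ℝ → Fin 3 → ℝ} (h : Sol g k γ) (hk : 0 < k) :
    Monotone (fun t => g ⬝ᵥ γ t) := by
  apply monotone_of_deriv_nonneg
  · exact fun t => (sol_V_deriv h t).differentiableAt
  · intro t
    rw [(sol_V_deriv h t).deriv]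
    have := cs3 g (γ t)
    rw [h.2 t] at this
    nlinarith

lemma sol_V_le {g : Fin 3 → ℝ} {k : ℝ} {γ : ℝ → Fin 3 → ℝ} (h : Sol g k γ) (hg : g ≠ 0)
    (t : ℝ) : -(g ⬝ᵥ g) ≤ g ⬝ᵥ γ t ∧ g ⬝ᵥ γ t ≤ g ⬝ᵥ g := by
  have hA := dot_pos_of_ne g hg
  have := cs3 g (γ t)
  rw [h.2 t] at this
  constructor <;> nlinarith

/-- The basin of attraction statement, as a standalone lemma. -/
lemma basin (g : Fin 3 → ℝ) (hg : g ≠ 0) (k : ℝ) (hk : 0 < k)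
    (γ : ℝ → Fin 3 → ℝ) (hγ : Sol g k γ) (h0 : γ 0 ≠ -g) :
    Filter.Tendsto γ Filter.atTop (nhds g) := by
  set A := g ⬝ᵥ g with hA
  have hA0 : 0 < A := dot_pos_of_ne g hg
  set V : ℝ → ℝ := fun t => g ⬝ᵥ γ t with hV
  have hmono : Monotone V := sol_V_mono hγ hk
  have hbdd : ∀ t, V t ≤ A := fun t => (sol_V_le hγ hg t).2
  have hbdd' : BddAbove (Set.range V) := ⟨A, by rintro _ ⟨t, rfl⟩; exact hbdd t⟩
  set L := ⨆ t, V t with hL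
  have htend : Filter.Tendsto V Filter.atTop (nhds L) := tendsto_atTop_ciSup hmono hbdd'
  have hVleL : ∀ t, V t ≤ L := fun t => le_ciSup hbdd' t
  have hLA : L ≤ A := ciSup_le hbdd
  have hV0 : -A < V 0 := by
    rcases lt_or_eq_of_le (sol_V_le hγ hg 0).1 with h | h
    · exact h
    · exact absurd (eq_neg_of_dot g (γ 0) (hγ.2 0) h.symm) h0
  have hLeq : L = A := by
    by_contra hne
    have hLlt : L < A := lt_of_le_of_ne hLA hne
    set m := k*(A-L)*(A+V 0) with hm
    have hm0 : 0 < m := by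
      apply mul_pos (mul_pos hk (by linarith)) (by linarith)
    have hmonoW : MonotoneOn (fun t => V t - m*t) (Set.Ici (0:ℝ)) := by
      apply monotoneOn_of_deriv_nonneg (convex_Ici 0)
      · apply Continuous.continuousOn
        exact (Continuous.sub (by
          have : Differentiable ℝ V := fun t => (sol_V_deriv hγ t).differentiableAt
          exact this.continuous) (continuous_const.mul continuous_id))
      · intro t _
        exact ((sol_V_deriv hγ t).sub
          ((hasDerivAt_id t).const_mul m)).differentiableAt.differentiableWithinAt
      · intro t ht
        rw [interior_Ici, Set.mem_Ioi] at ht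
        have hder : HasDerivAt (fun t => V t - m*t) (k * (A^2 - (V t)^2) - m) t := by
          have h' := (sol_V_deriv hγ t).sub ((hasDerivAt_id t).const_mul m)
          simp only [id, mul_one] at h'
          exact h'
        rw [hder.deriv]
        have f1 : A - L ≤ A - V t := by have := hVleL t; linarith
        have f2 : A + V 0 ≤ A + V t := by have := hmono ht.le; simp only [hV] at this ⊢; linarith
        have f3 := mul_le_mul f1 f2 (by linarith) (by have := hVleL t; linarith)
        rw [hm]; nlinarith
    have hT0 : (0:ℝ) ≤ (A - V 0)/m + 1 := by
      have : 0 ≤ (A - V 0)/m := div_nonneg (by have := hbdd 0; linarith) hm0.le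
      linarith
    have hWle := hmonoW (Set.self_mem_Ici) (Set.mem_Ici.mpr hT0) hT0
    have hVT := hbdd ((A - V 0)/m + 1)
    have hdiv : m * ((A - V 0)/m + 1) = (A - V 0) + m := by field_simp
    simp only at hWle
    nlinarith
  rw [tendsto_iff_norm_sub_tendsto_zero]
  apply squeeze_zero (fun t => norm_nonneg _) (g := fun t => Real.sqrt (2*A - 2*V t))
  · intro t
    have hE : (γ t - g) ⬝ᵥ (γ t - g) = 2*A - 2*V t := by
      rw [dot_sub_sub, hγ.2 t]; ring
    have h1 : ‖γ t - g‖^2 ≤ 2*A - 2*V t := hE ▸ normsq_le_dot (γ t - g)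
    rw [← Real.sqrt_sq (norm_nonneg (γ t - g))]
    exact Real.sqrt_le_sqrt h1
  · have h2 : Filter.Tendsto (fun t => 2*A - 2*V t) Filter.atTop (nhds (2*A - 2*L)) :=
      (tendsto_const_nhds.sub (htend.const_mul 2))
    rw [hLeq] at h2
    have h0' : (2*A - 2*A : ℝ) = 0 := by ring
    rw [h0'] at h2
    have := (Real.continuous_sqrt.tendsto 0).comp h2
    rw [Real.sqrt_zero] at this
    exact this

lemma exists_perp (g : Fin 3 → ℝ) (hg : g ≠ 0) :
    ∃ u : Fin 3 → ℝ, u ⬝ᵥ g = 0 ∧ u ⬝ᵥ u = g ⬝ᵥ g := by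
  have hgg : 0 < g ⬝ᵥ g := dot_pos_of_ne g hg
  by_cases h01 : g 0 = 0 ∧ g 1 = 0
  · refine ⟨Real.sqrt (g ⬝ᵥ g) • ![1,0,0], ?_, ?_⟩
    · simp only [dot3, Pi.smul_apply, smul_eq_mul]
      simp [h01.1, h01.2]
    · have key := Real.mul_self_sqrt hgg.le
      simp only [dot3, Pi.smul_apply, smul_eq_mul] at key ⊢
      simp only [Matrix.cons_val_zero, Matrix.cons_val_one, Matrix.head_cons]
      rw [Matrix.cons_val_two]
      simp only [Matrix.tail_cons, Matrix.head_cons]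
      nlinarith [key]
  · set w : Fin 3 → ℝ := ![-g 1, g 0, 0] with hw
    have hww : 0 < w ⬝ᵥ w := by
      simp only [dot3, hw]
      simp
      rcases not_and_or.mp h01 with h | h <;>
        nlinarith [sq_nonneg (g 0), sq_nonneg (g 1), mul_self_pos.mpr h]
    refine ⟨Real.sqrt ((g ⬝ᵥ g)/(w ⬝ᵥ w)) • w, ?_, ?_⟩
    · simp only [dot3, Pi.smul_apply, smul_eq_mul, hw]
      simp
      ring
    · have hs : Real.sqrt ((g ⬝ᵥ g)/(w ⬝ᵥ w)) ^ 2 = (g ⬝ᵥ g)/(w ⬝ᵥ w) :=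
        Real.sq_sqrt (div_nonneg hgg.le hww.le)
      have key : (Real.sqrt ((g ⬝ᵥ g)/(w ⬝ᵥ w)))^2 * (w ⬝ᵥ w) = g ⬝ᵥ g := by
        rw [hs, div_mul_cancel₀ _ hww.ne']
      simp only [dot3, Pi.smul_apply, smul_eq_mul] at key ⊢
      nlinarith [key]

/-- Construction of a great-circle solution. -/
lemma sol_construct (g u : Fin 3 → ℝ) (k c₀ : ℝ) (hk : 0 < k) (hg : g ≠ 0)
    (hug : u ⬝ᵥ g = 0) (huu : u ⬝ᵥ u = g ⬝ᵥ g) :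
    Sol g k (fun t =>
      ((1 - (c₀ * Real.exp (-(k * (g ⬝ᵥ g) * t)))^2)/(1 + (c₀ * Real.exp (-(k * (g ⬝ᵥ g) * t)))^2)) • g
      + ((2 * (c₀ * Real.exp (-(k * (g ⬝ᵥ g) * t))))/(1 + (c₀ * Real.exp (-(k * (g ⬝ᵥ g) * t)))^2)) • u) := by
  set lam := k * (g ⬝ᵥ g) with hlam
  set φ : ℝ → ℝ := fun t => c₀ * Real.exp (-(lam * t)) with hφdef
  set c : ℝ → ℝ := fun t => (1 - φ t^2)/(1 + φ t^2) with hcdef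
  set s : ℝ → ℝ := fun t => (2 * φ t)/(1 + φ t^2) with hsdef
  have hden : ∀ t, (0:ℝ) < 1 + φ t^2 := fun t => by positivity
  have hφ : ∀ t, HasDerivAt φ (-lam * φ t) t := by
    intro t
    have h1 : HasDerivAt (fun t : ℝ => -(lam * t)) (-lam) t := by
      simpa using ((hasDerivAt_id t).const_mul lam).fun_neg
    have h2 := (h1.exp).const_mul c₀
    refine h2.congr_deriv ?_
    simp only [hφdef]; ring
  have hc : ∀ t, HasDerivAt c (lam * s t^2) t := by
    intro t
    have hnum := (hasDerivAt_const t 1).sub ((hφ t).pow 2)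
    have hden' := (hasDerivAt_const t 1).add ((hφ t).pow 2)
    have h := hnum.div hden' (hden t).ne'
    refine h.congr_deriv ?_
    rw [hsdef]
    simp only [pow_one, Nat.cast_ofNat, Pi.add_apply, Pi.sub_apply, Pi.pow_apply]
    field_simp
    ring
  have hs : ∀ t, HasDerivAt s (-(lam * s t * c t)) t := by
    intro t
    have hnum : HasDerivAt (fun t => 2 * φ t) (2 * (-lam * φ t)) t := (hφ t).const_mul 2
    have hden' := (hasDerivAt_const t 1).add ((hφ t).pow 2)
    have h := hnum.div hden' (hden t).ne'
    refine h.congr_deriv ?_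
    rw [hsdef, hcdef]
    simp only [pow_one, Nat.cast_ofNat, Pi.add_apply, Pi.sub_apply, Pi.pow_apply]
    field_simp
    ring
  have hcs : ∀ t, c t^2 + s t^2 = 1 := by
    intro t
    rw [hcdef, hsdef]
    have := (hden t).ne'
    field_simp
    ring
  have hug' := hug
  have huu' := huu
  simp only [dot3] at hug' huu'
  have hγγ : ∀ t, (c t • g + s t • u) ⬝ᵥ (c t • g + s t • u) = g ⬝ᵥ g := by
    intro t
    simp only [dot3, Pi.add_apply, Pi.smul_apply, smul_eq_mul]
    linear_combination (2 * c t * s t) * hug' + (s t^2) * huu'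
      + (g 0 * g 0 + g 1 * g 1 + g 2 * g 2) * (hcs t)
  have hgγ : ∀ t, g ⬝ᵥ (c t • g + s t • u) = c t * (g ⬝ᵥ g) := by
    intro t
    simp only [dot3, Pi.add_apply, Pi.smul_apply, smul_eq_mul]
    linear_combination (s t) * hug'
  constructor
  · intro t
    have hd : HasDerivAt (fun t => c t • g + s t • u)
        ((lam * s t^2) • g + (-(lam * s t * c t)) • u) t :=
      ((hc t).smul_const g).add ((hs t).smul_const u)
    have heq : (lam * s t^2) • g + (-(lam * s t * c t)) • u
        = k • cross (cross (c t • g + s t • u) g) (c t • g + s t • u) := by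
      rw [cross_cross_self, hγγ t, hgγ t]
      funext i
      simp only [Pi.add_apply, Pi.smul_apply, Pi.sub_apply, smul_eq_mul]
      rw [hlam]
      linear_combination (k * (g ⬝ᵥ g) * g i) * (hcs t)
    rw [← heq]
    exact hd
  · intro t
    exact hγγ t

theorem stmt15 (g : Fin 3 → ℝ) (hg : g ≠ 0) (k : ℝ) (hk : 0 < k) :
    (∀ ε > 0, ∃ δ > 0, ∀ γ, Sol g k γ → ‖γ 0 - g‖ < δ → ∀ t ≥ (0 : ℝ), ‖γ t - g‖ < ε) ∧
    (∀ γ, Sol g k γ → γ 0 ≠ -g → Filter.Tendsto γ Filter.atTop (nhds g)) ∧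
    ¬ (∀ ε > 0, ∃ δ > 0, ∀ γ, Sol g k γ → ‖γ 0 - (-g)‖ < δ →
        ∀ t ≥ (0 : ℝ), ‖γ t - (-g)‖ < ε) := by
  refine ⟨?_, fun γ hγ h0 => basin g hg k hk γ hγ h0, ?_⟩
  · -- stability
    intro ε hε
    refine ⟨ε/2, by linarith, fun γ hγ h0 t ht => ?_⟩
    have hmono := sol_V_mono hγ hk ht
    have hE : ∀ r, (γ r - g) ⬝ᵥ (γ r - g) = 2*(g ⬝ᵥ g) - 2*(g ⬝ᵥ γ r) := by
      intro r; rw [dot_sub_sub, hγ.2 r]; ring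
    have h1 : ‖γ t - g‖^2 ≤ 2*(g ⬝ᵥ g) - 2*(g ⬝ᵥ γ t) := (hE t) ▸ normsq_le_dot (γ t - g)
    have h2 : 2*(g ⬝ᵥ g) - 2*(g ⬝ᵥ γ 0) ≤ 3*‖γ 0 - g‖^2 := (hE 0) ▸ dot_le_normsq (γ 0 - g)
    have h3 : ‖γ 0 - g‖^2 < (ε/2)^2 := by
      have := norm_nonneg (γ 0 - g)
      nlinarith
    simp only at hmono
    nlinarith [norm_nonneg (γ t - g)]
  · -- instability of -g
    intro hcon
    obtain ⟨u, hug, huu⟩ := exists_perp g hg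
    have hA0 : 0 < g ⬝ᵥ g := dot_pos_of_ne g hg
    have hgn : 0 < ‖g‖ := norm_pos_iff.mpr hg
    obtain ⟨δ, hδ0, hδ⟩ := hcon ‖g‖ hgn
    set c₀ : ℝ := max 1 (4*(‖g‖+‖u‖+1)/δ) with hc₀
    have hc₀1 : 1 ≤ c₀ := le_max_left _ _
    have hc₀δ : 4*(‖g‖+‖u‖+1)/δ ≤ c₀ := le_max_right _ _
    have hc₀pos : 0 < c₀ := lt_of_lt_of_le one_pos hc₀1
    set γ : ℝ → Fin 3 → ℝ := fun t =>
      ((1 - (c₀ * Real.exp (-(k * (g ⬝ᵥ g) * t)))^2)/(1 + (c₀ * Real.exp (-(k * (g ⬝ᵥ g) * t)))^2)) • g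
      + ((2 * (c₀ * Real.exp (-(k * (g ⬝ᵥ g) * t))))/(1 + (c₀ * Real.exp (-(k * (g ⬝ᵥ g) * t)))^2)) • u
      with hγdef
    have hSol : Sol g k γ := sol_construct g u k c₀ hk hg hug huu
    have hφ0 : c₀ * Real.exp (-(k * (g ⬝ᵥ g) * 0)) = c₀ := by simp
    have hγ0 : γ 0 = ((1 - c₀^2)/(1 + c₀^2)) • g + ((2*c₀)/(1 + c₀^2)) • u := by
      rw [hγdef]; simp only [hφ0]
    have hden0 : (0:ℝ) < 1 + c₀^2 := by positivity
    -- γ 0 ≠ -g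
    have hne : γ 0 ≠ -g := by
      intro hcontra
      have h1 : u ⬝ᵥ γ 0 = (2*c₀)/(1 + c₀^2) * (g ⬝ᵥ g) := by
        rw [hγ0]
        simp only [dot3] at hug huu ⊢
        simp only [Pi.add_apply, Pi.smul_apply, smul_eq_mul]
        linear_combination ((1 - c₀^2)/(1 + c₀^2)) * hug + ((2*c₀)/(1 + c₀^2)) * huu
      have h2 : u ⬝ᵥ (-g) = 0 := by
        simp only [dot3, Pi.neg_apply] at hug ⊢
        linarith [hug]
      rw [hcontra, h2] at h1
      have : 0 < (2*c₀)/(1 + c₀^2) * (g ⬝ᵥ g) := by positivity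
      linarith [h1 ▸ this]
    -- ‖γ 0 - (-g)‖ < δ
    have hnorm0 : ‖γ 0 - (-g)‖ < δ := by
      have hplus : γ 0 - (-g) = ((1 - c₀^2)/(1 + c₀^2) + 1) • g + ((2*c₀)/(1 + c₀^2)) • u := by
        rw [sub_neg_eq_add, hγ0]
        funext i
        simp only [Pi.add_apply, Pi.smul_apply, smul_eq_mul]
        ring
      rw [hplus]
      have htri : ‖((1 - c₀^2)/(1 + c₀^2) + 1) • g + ((2*c₀)/(1 + c₀^2)) • u‖
          ≤ |(1 - c₀^2)/(1 + c₀^2) + 1| * ‖g‖ + |(2*c₀)/(1 + c₀^2)| * ‖u‖ := by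
        calc _ ≤ ‖((1 - c₀^2)/(1 + c₀^2) + 1) • g‖ + ‖((2*c₀)/(1 + c₀^2)) • u‖ := norm_add_le _ _
        _ = _ := by rw [norm_smul, norm_smul, Real.norm_eq_abs, Real.norm_eq_abs]
      have e1 : (1 - c₀^2)/(1 + c₀^2) + 1 = 2/(1 + c₀^2) := by field_simp; ring
      have b1 : |(1 - c₀^2)/(1 + c₀^2) + 1| ≤ 2/c₀ := by
        rw [e1, abs_of_pos (by positivity)]
        rw [div_le_div_iff₀ hden0 hc₀pos]
        nlinarith
      have b2 : |(2*c₀)/(1 + c₀^2)| ≤ 2/c₀ := by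
        rw [abs_of_pos (by positivity), div_le_div_iff₀ hden0 hc₀pos]
        nlinarith
      have hub : |(1 - c₀^2)/(1 + c₀^2) + 1| * ‖g‖ + |(2*c₀)/(1 + c₀^2)| * ‖u‖
          ≤ 2/c₀ * (‖g‖ + ‖u‖) := by
        have := norm_nonneg g
        have := norm_nonneg u
        nlinarith [b1, b2, abs_nonneg ((1 - c₀^2)/(1 + c₀^2) + 1), abs_nonneg ((2*c₀)/(1 + c₀^2))]
      have hfin : 2/c₀ * (‖g‖ + ‖u‖) < δ := by
        have h4 : 4*(‖g‖+‖u‖+1) ≤ c₀ * δ := by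
          rw [div_le_iff₀ hδ0] at hc₀δ
          linarith
        rw [div_mul_eq_mul_div, div_lt_iff₀ hc₀pos]
        have := norm_nonneg g
        have := norm_nonneg u
        nlinarith
      linarith [htri, hub, hfin]
    -- apply instability hypothesis
    have hbound := hδ γ hSol hnorm0
    -- γ tends to g, so eventually it is ‖g‖-close to g
    have htend := basin g hg k hk γ hSol hne
    have hev : ∀ᶠ t in Filter.atTop, ‖γ t - g‖ < ‖g‖ := by
      have := tendsto_iff_norm_sub_tendsto_zero.mp htend
      exact this.eventually_lt_const hgn
    obtain ⟨t, ht0, htlt⟩ := (hev.and (Filter.eventually_ge_atTop (0:ℝ))).exists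
    have hlt := hbound t htlt
    have h2g : ‖γ t - (-g)‖ + ‖γ t - g‖ ≥ 2*‖g‖ := by
      have hid : (γ t - (-g)) - (γ t - g) = g + g := by abel
      have := norm_sub_le (γ t - (-g)) (γ t - g)
      rw [hid] at this
      have h2 : ‖g + g‖ = 2*‖g‖ := by
        rw [← two_smul ℝ g, norm_smul]
        simp
      linarith [h2 ▸ this]
    linarith
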